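/- arXiv:math/0311440 — 4 statements merged into one kernel-verified Lean document; each statement's English description precedes it below -/
import Mathlib

section
/- Let (x_n) be a sequence in (0,1) with x_1 ∈ (0, 1/2) satisfying the recurrence x_{n+1} = (1 + x_n)^2 / 4. Then for every n ≥ 1 one has 0 ≤ x_n ≤ 1 - 1/(2n). -/
theorem stmt_0 (x : ℕ → ℝ)
    (hmem : ∀ n, 1 ≤ n → x n ∈ Set.Ioo (0 : ℝ) 1)
    (hx1 : x 1 ∈ Set.Ioo (0 : ℝ) (1 / 2))
    (hrec : ∀ n, 1 ≤ n → x (n + 1) = (1 + x n) ^ 2 / 4) :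
    ∀ n, 1 ≤ n → 0 ≤ x n ∧ x n ≤ 1 - 1 / (2 * n) := by
  intro n hn
  induction n, hn using Nat.le_induction with
  | base =>
    constructor
    · exact le_of_lt hx1.1
    · push_cast
      linarith [hx1.2]
  | succ n hn ih =>
    have hpos := (hmem n hn).1
    have hrec' := hrec n hn
    have hnR : (1 : ℝ) ≤ (n : ℝ) := by exact_mod_cast hn
    have ih2 := ih.2
    constructor
    · rw [hrec']; positivity
    · rw [hrec']
      push_cast
      have h2n : (0:ℝ) < 2 * n := by linarith
      have h2n1 : (0:ℝ) < 2 * (n + 1) := by linarith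
      have hbpos : (0:ℝ) < 1 / (2 * n) := by positivity
      have hble : (1:ℝ) / (2 * n) ≤ 1 / 2 := by
        rw [div_le_div_iff₀ h2n (by norm_num : (0:ℝ) < 2)]; linarith
      have key : (1:ℝ) / (2 * (n + 1)) ≤ 1 / (2 * n) - (1 / (2 * n)) ^ 2 / 4 := by
        rw [div_pow, div_div]
        rw [show (1:ℝ)/(2*n) - 1^2/((2*(n:ℝ))^2*4) = (8*n - 1)/((2*n)^2*4) by
          field_simp; ring]
        rw [div_le_div_iff₀ h2n1 (by positivity)]
        nlinarith [sq_nonneg ((n:ℝ) - 1)]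
      nlinarith [sq_nonneg (1 - 1/(2*(n:ℝ)) - x n), sq_nonneg (x n)]
end

section
/- Let (x_n) be a sequence in (0,1) with x_1 ∈ (0,1/2) satisfying x_{n+1} = (1+x_n)^2/4. Then x_{n+1} - x_n ≥ 1/(16 n^2) for all n ≥ 1. -/
theorem stmt_2 (x : ℕ → ℝ)
    (hmem : ∀ n, 1 ≤ n → x n ∈ Set.Ioo (0 : ℝ) 1)
    (hx1 : x 1 ∈ Set.Ioo (0 : ℝ) (1 / 2))
    (hrec : ∀ n, 1 ≤ n → x (n + 1) = (1 + x n) ^ 2 / 4) :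
    ∀ n, 1 ≤ n → x (n + 1) - x n ≥ 1 / (16 * (n : ℝ) ^ 2) := by
  have key : ∀ n, 1 ≤ n → x n ≤ 1 - 1 / (2 * (n : ℝ)) := by
    intro n hn
    induction n, hn using Nat.le_induction with
    | base => norm_num; linarith [hx1.2]
    | succ n hn ih =>
      have hn' : (1 : ℝ) ≤ (n : ℝ) := by exact_mod_cast hn
      rw [hrec n hn]
      push_cast
      have h1 : (1 + x n) ^ 2 / 4 ≤ (2 - 1 / (2 * (n : ℝ))) ^ 2 / 4 := by
        have hpos : (0 : ℝ) < x n := (hmem n hn).1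
        have : 0 ≤ 1 + x n := by linarith
        gcongr <;> nlinarith
      have h2 : (2 - 1 / (2 * (n : ℝ))) ^ 2 / 4 ≤ 1 - 1 / (2 * ((n : ℝ) + 1)) := by
        have hnpos : (0 : ℝ) < n := by linarith
        have hne : (2 * (n:ℝ)) ≠ 0 := by positivity
        have eq1 : (2 - 1 / (2 * (n : ℝ))) ^ 2 / 4
            = 1 - 1 / (2 * (n:ℝ)) + 1 / (16 * (n:ℝ)^2) := by
          field_simp
          ring
        have key2 : 1 / (2 * ((n:ℝ) + 1)) ≤ 1 / (2 * (n:ℝ)) - 1 / (16 * (n:ℝ)^2) := by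
          rw [div_sub_div _ _ hne (by positivity), div_le_div_iff₀ (by positivity) (by positivity)]
          ring_nf
          nlinarith [sq_nonneg ((n:ℝ))]
        linarith [eq1, key2]
      linarith
  intro n hn
  have hn' : (1 : ℝ) ≤ (n : ℝ) := by exact_mod_cast hn
  have hb := key n hn
  have hpos : (0 : ℝ) < x n := (hmem n hn).1
  rw [hrec n hn, ge_iff_le, div_le_iff₀ (by positivity)]
  have h3 : 1 / (2 * (n : ℝ)) ≤ 1 - x n := by linarith
  have h4 : (1 / (2 * (n : ℝ))) ^ 2 ≤ (1 - x n) ^ 2 :=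
    pow_le_pow_left₀ (by positivity) h3 2
  have h5 : (1 / (2 * (n : ℝ))) ^ 2 = 1 / (4 * (n : ℝ)^2) := by
    field_simp; ring
  rw [h5] at h4
  have : (1 + x n) ^ 2 / 4 - x n = (1 - x n)^2 / 4 := by ring
  rw [this]
  rw [div_le_iff₀ (by positivity)] at h4
  calc (1:ℝ) ≤ (1 - x n)^2 * (4 * (n:ℝ)^2) := h4
    _ = (1 - x n)^2 / 4 * (16 * (n:ℝ)^2) := by ring
end

section
/- Let (x_n) be a sequence in (0,1) with x_1 ∈ (0,1/2) satisfying x_{n+1} = (1+x_n)^2/4. Then the series ∑_{n≥1} n (x_{n+1} - x_n) diverges to +∞. -/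
open Filter

theorem stmt_3 (x : ℕ → ℝ)
    (hmem : ∀ n, 1 ≤ n → x n ∈ Set.Ioo (0 : ℝ) 1)
    (hx1 : x 1 ∈ Set.Ioo (0 : ℝ) (1 / 2))
    (hrec : ∀ n, 1 ≤ n → x (n + 1) = (1 + x n) ^ 2 / 4) :
    Tendsto (fun N : ℕ => ∑ n ∈ Finset.Icc 1 N, (n : ℝ) * (x (n + 1) - x n))
      atTop atTop := by
  -- Step 1: 1/(1 - x n) ≤ n/3 + 2
  have hy : ∀ n, 1 ≤ n → 1 / (1 - x n) ≤ (n : ℝ) / 3 + 2 := by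
    intro n hn
    induction n, hn using Nat.le_induction with
    | base =>
      obtain ⟨h0, h1⟩ := hx1
      rw [div_le_iff₀ (by linarith)]
      push_cast
      nlinarith
    | succ n hn ih =>
      obtain ⟨h0, h1⟩ := hmem n hn
      obtain ⟨h0', h1'⟩ := hmem (n + 1) (by omega)
      have hy0 : (0 : ℝ) < 1 - x n := by linarith
      have hA : (0 : ℝ) < 1 - x (n + 1) := by linarith
      have hinv : (1 / (1 - x n)) * (1 - x n) = 1 := by field_simp
      have step : 1 / (1 - x (n + 1)) ≤ 1 / (1 - x n) + 1 / 3 := by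
        rw [div_le_iff₀ hA, hrec n hn]
        nlinarith [hinv, mul_nonneg h0.le (by linarith : (0:ℝ) ≤ 1 - x n),
          div_nonneg (by norm_num : (0:ℝ) ≤ 1) hy0.le]
      push_cast
      linarith
  -- Step 2: 1 - x n ≥ 1/(3n)
  have hy2 : ∀ n : ℕ, 1 ≤ n → 1 / (3 * (n : ℝ)) ≤ 1 - x n := by
    intro n hn
    obtain ⟨h0, h1⟩ := hmem n hn
    have hy0 : (0 : ℝ) < 1 - x n := by linarith
    have hn' : (1 : ℝ) ≤ n := by exact_mod_cast hn
    have h := hy n hn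
    rw [div_le_iff₀ hy0] at h
    rw [div_le_iff₀ (by linarith)]
    nlinarith
  -- Step 3: termwise lower bound 1/(36 n) ≤ n (x_{n+1} - x_n)
  have hterm : ∀ n : ℕ, 1 ≤ n → 1 / (36 * (n : ℝ)) ≤ (n : ℝ) * (x (n + 1) - x n) := by
    intro n hn
    have hn' : (1 : ℝ) ≤ n := by exact_mod_cast hn
    have hn0 : (0 : ℝ) < n := by linarith
    have hd := hy2 n hn
    have hsq : (1 / (3 * (n : ℝ))) ^ 2 ≤ (1 - x n) ^ 2 :=
      pow_le_pow_left₀ (by positivity) hd 2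
    calc 1 / (36 * (n : ℝ)) = (n : ℝ) * ((1 / (3 * n)) ^ 2) / 4 := by
          field_simp; ring
      _ ≤ (n : ℝ) * ((1 - x n) ^ 2) / 4 := by gcongr
      _ = (n : ℝ) * (x (n + 1) - x n) := by rw [hrec n hn]; ring
  -- Step 4: divergence via comparison with harmonic series
  have hS : Tendsto (fun N : ℕ => ∑ n ∈ Finset.Icc 1 N, 1 / (36 * (n : ℝ)))
      atTop atTop := by
    have heq : (fun N : ℕ => ∑ n ∈ Finset.Icc 1 N, 1 / (36 * (n : ℝ)))
        = fun N : ℕ => (1 / 36) * ∑ i ∈ Finset.range N, 1 / ((i : ℝ) + 1) := by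
      funext N
      rw [Finset.mul_sum, ← Finset.Ico_add_one_right_eq_Icc, Finset.sum_Ico_eq_sum_range]
      simp only [Nat.add_sub_cancel]
      refine Finset.sum_congr rfl fun i _ => ?_
      have h : (1 : ℝ) + i ≠ 0 := by positivity
      push_cast
      field_simp
      ring
    rw [heq]
    exact Real.tendsto_sum_range_one_div_nat_succ_atTop.const_mul_atTop (by norm_num)
  refine tendsto_atTop_mono (fun N => ?_) hS
  exact Finset.sum_le_sum fun n hn => hterm n (Finset.mem_Icc.mp hn).1
end

section
/- The map f : [-1,1] → [-1,1] defined by f(x) = 2√x − 1 for x ≥ 0 and f(x) = 1 − 2√(−x) for x < 0 preserves the normalized Lebesgue measure on [-1,1] (viewed as the circle with ±1 identified): for every Borel set A, m(f^{-1}(A)) = m(A). -/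
open MeasureTheory
open scoped ENNReal

/-- The intermittent Manneville-type circle map on `[-1,1]`. -/
noncomputable def mannevilleMap (x : ℝ) : ℝ :=
  if 0 ≤ x then 2 * Real.sqrt x - 1 else 1 - 2 * Real.sqrt (-x)

/-- Normalized Lebesgue measure on `[-1,1]`. -/
noncomputable def circleMeasure : Measure ℝ :=
  (2 : ℝ≥0∞)⁻¹ • (volume.restrict (Set.Icc (-1 : ℝ) 1))

noncomputable def phi1 (y : ℝ) : ℝ := ((y + 1) / 2) ^ 2
noncomputable def phi2 (y : ℝ) : ℝ := -(((1 - y) / 2) ^ 2)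

lemma mannevilleMap_measurable : Measurable mannevilleMap := by
  unfold mannevilleMap
  exact Measurable.ite measurableSet_Ici
    (by fun_prop) (by fun_prop)

lemma hasDeriv_phi1 (y : ℝ) : HasDerivAt phi1 ((y + 1) / 2) y := by
  have h : HasDerivAt (fun y : ℝ => ((y + 1) / 2) ^ 2)
      (2 * ((y + 1) / 2) ^ 1 * (1 / 2)) y :=
    (((hasDerivAt_id y).add_const 1).div_const 2).pow 2
  convert h using 1
  · rfl
  ring

lemma hasDeriv_phi2 (y : ℝ) : HasDerivAt phi2 ((1 - y) / 2) y := by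
  have h : HasDerivAt (fun y : ℝ => -(((1 - y) / 2) ^ 2))
      (-(2 * ((1 - y) / 2) ^ 1 * (-1 / 2))) y :=
    ((((hasDerivAt_id y).const_sub 1).div_const 2).pow 2).neg
  convert h using 1
  · rfl
  ring

lemma image_phi1 (A : Set ℝ) :
    mannevilleMap ⁻¹' A ∩ Set.Icc (-1 : ℝ) 1 ∩ Set.Icc 0 1
      = phi1 '' (A ∩ Set.Icc (-1 : ℝ) 1) := by
  ext x
  constructor
  · rintro ⟨⟨hA, -⟩, hx0, hx1⟩
    refine ⟨mannevilleMap x, ⟨?_, ?_, ?_⟩, ?_⟩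
    · simpa using hA
    · simp only [mannevilleMap, if_pos hx0]
      nlinarith [Real.sqrt_nonneg x]
    · simp only [mannevilleMap, if_pos hx0]
      nlinarith [Real.sq_sqrt hx0, Real.sqrt_nonneg x, Real.sqrt_le_one.mpr hx1]
    · simp only [phi1, mannevilleMap, if_pos hx0]
      have := Real.sq_sqrt hx0
      nlinarith
  · rintro ⟨y, ⟨hyA, hy1, hy2⟩, rfl⟩
    have h1 : (0:ℝ) ≤ (y + 1) / 2 := by linarith
    have hphi : mannevilleMap (phi1 y) = y := by
      simp only [mannevilleMap, phi1, if_pos (sq_nonneg ((y + 1) / 2))]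
      simp only [sq_nonneg, ↓reduceIte]
      rw [Real.sqrt_sq h1]
      ring
    refine ⟨⟨by rw [Set.mem_preimage, hphi]; exact hyA, ?_, ?_⟩, sq_nonneg _, ?_⟩
    · simp only [phi1]; nlinarith [sq_nonneg ((y+1)/2)]
    · simp only [phi1]; nlinarith
    · simp only [phi1]; nlinarith

lemma image_phi2 (A : Set ℝ) :
    (mannevilleMap ⁻¹' A ∩ Set.Icc (-1 : ℝ) 1) \ Set.Icc 0 1
      = phi2 '' (A ∩ Set.Ico (-1 : ℝ) 1) := by
  ext x
  constructor
  · rintro ⟨⟨hA, hx1, hx2⟩, hx⟩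
    have hx0 : x < 0 := by
      by_contra h
      exact hx ⟨le_of_not_gt h, hx2⟩
    have hx0' : ¬ (0 ≤ x) := not_le.mpr hx0
    have hs : (0:ℝ) < Real.sqrt (-x) := Real.sqrt_pos.mpr (by linarith)
    refine ⟨mannevilleMap x, ⟨?_, ?_, ?_⟩, ?_⟩
    · simpa using hA
    · simp only [mannevilleMap, if_neg hx0']
      nlinarith [Real.sq_sqrt (by linarith : (0:ℝ) ≤ -x), Real.sqrt_le_one.mpr (by linarith : -x ≤ 1)]
    · simp only [mannevilleMap, if_neg hx0']
      linarith
    · simp only [phi2, mannevilleMap, if_neg hx0']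
      have := Real.sq_sqrt (by linarith : (0:ℝ) ≤ -x)
      nlinarith
  · rintro ⟨y, ⟨hyA, hy1, hy2⟩, rfl⟩
    have h1 : (0:ℝ) < (1 - y) / 2 := by linarith
    have hneg : phi2 y < 0 := by simp only [phi2]; nlinarith
    have hphi : mannevilleMap (phi2 y) = y := by
      show (if 0 ≤ phi2 y then _ else _) = y
      rw [if_neg (not_le.mpr hneg)]
      rw [show phi2 y = -(((1 - y) / 2) ^ 2) from rfl, neg_neg, Real.sqrt_sq h1.le]
      ring
    refine ⟨⟨by rw [Set.mem_preimage, hphi]; exact hyA, ?_, hneg.le.trans (by norm_num)⟩,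
      fun h => absurd h.1 (not_le.mpr hneg)⟩
    simp only [phi2]; nlinarith

lemma vol_image_phi1 {S : Set ℝ} (hS : MeasurableSet S) (hS' : S ⊆ Set.Icc (-1 : ℝ) 1) :
    volume (phi1 '' S) = ∫⁻ y in S, ENNReal.ofReal ((y + 1) / 2) := by
  have hderiv : ∀ y ∈ S, HasFDerivWithinAt phi1
      ((1 : ℝ →L[ℝ] ℝ).smulRight ((y + 1) / 2)) S y :=
    fun y _ => (hasDeriv_phi1 y).hasDerivWithinAt.hasFDerivWithinAt
  have hinj : Set.InjOn phi1 S := by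
    intro a ha b hb hab
    have ha' := hS' ha; have hb' := hS' hb
    simp only [phi1] at hab
    have : (a + 1) / 2 = (b + 1) / 2 := by
      have h1 : (0:ℝ) ≤ (a + 1) / 2 := by have := ha'.1; linarith
      have h2 : (0:ℝ) ≤ (b + 1) / 2 := by have := hb'.1; linarith
      nlinarith
    linarith
  rw [← MeasureTheory.lintegral_abs_det_fderiv_eq_addHaar_image volume hS hderiv hinj]
  refine setLIntegral_congr_fun hS (fun y hy => ?_)
  have := (hS' hy).1
  rw [ContinuousLinearMap.det_smulRight, ContinuousLinearMap.one_apply, one_mul, abs_of_nonneg (by linarith)]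

lemma vol_image_phi2 {S : Set ℝ} (hS : MeasurableSet S) (hS' : S ⊆ Set.Icc (-1 : ℝ) 1) :
    volume (phi2 '' S) = ∫⁻ y in S, ENNReal.ofReal ((1 - y) / 2) := by
  have hderiv : ∀ y ∈ S, HasFDerivWithinAt phi2
      ((1 : ℝ →L[ℝ] ℝ).smulRight ((1 - y) / 2)) S y :=
    fun y _ => (hasDeriv_phi2 y).hasDerivWithinAt.hasFDerivWithinAt
  have hinj : Set.InjOn phi2 S := by
    intro a ha b hb hab
    have ha' := hS' ha; have hb' := hS' hb
    simp only [phi2, neg_inj] at hab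
    have : (1 - a) / 2 = (1 - b) / 2 := by
      have h1 : (0:ℝ) ≤ (1 - a) / 2 := by have := ha'.2; linarith
      have h2 : (0:ℝ) ≤ (1 - b) / 2 := by have := hb'.2; linarith
      nlinarith
    linarith
  rw [← MeasureTheory.lintegral_abs_det_fderiv_eq_addHaar_image volume hS hderiv hinj]
  refine setLIntegral_congr_fun hS (fun y hy => ?_)
  have := (hS' hy).2
  rw [ContinuousLinearMap.det_smulRight, ContinuousLinearMap.one_apply, one_mul, abs_of_nonneg (by linarith)]

theorem stmt_5 :
    ∀ A : Set ℝ, MeasurableSet A →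
      circleMeasure (mannevilleMap ⁻¹' A) = circleMeasure A := by
  intro A hA
  have hpre : MeasurableSet (mannevilleMap ⁻¹' A) := mannevilleMap_measurable hA
  have hIcc : MeasurableSet (Set.Icc (-1 : ℝ) 1) := measurableSet_Icc
  simp only [circleMeasure, Measure.smul_apply, Measure.restrict_apply hpre,
    Measure.restrict_apply hA]
  congr 1
  set S := A ∩ Set.Icc (-1 : ℝ) 1 with hSdef
  have hSmeas : MeasurableSet S := hA.inter hIcc
  have hSsub : S ⊆ Set.Icc (-1 : ℝ) 1 := Set.inter_subset_right
  set S' := A ∩ Set.Ico (-1 : ℝ) 1 with hS'def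
  have hS'meas : MeasurableSet S' := hA.inter measurableSet_Ico
  have hS'sub : S' ⊆ Set.Icc (-1 : ℝ) 1 :=
    fun x hx => ⟨hx.2.1, hx.2.2.le⟩
  have hsplit := measure_inter_add_diff (μ := volume)
    (mannevilleMap ⁻¹' A ∩ Set.Icc (-1 : ℝ) 1) (measurableSet_Icc (a := (0:ℝ)) (b := 1))
  rw [← hsplit, image_phi1 A, image_phi2 A, vol_image_phi1 hSmeas hSsub,
    vol_image_phi2 hS'meas hS'sub]
  have hae : S' =ᵐ[volume] S := by
    rw [MeasureTheory.ae_eq_set]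
    constructor
    · exact measure_mono_null (fun x hx => (hx.2 ⟨hx.1.1, hx.1.2.1, hx.1.2.2.le⟩).elim) (measure_empty)
    · refine measure_mono_null (t := {(1:ℝ)}) ?_ (measure_singleton 1)
      rintro x ⟨⟨hxA, hx1, hx2⟩, hx⟩
      have : ¬ (x < 1) := fun h => hx ⟨hxA, hx1, h⟩
      simpa using le_antisymm hx2 (not_lt.mp this)
  rw [setLIntegral_congr hae]
  rw [← lintegral_add_left (by fun_prop)]
  rw [show (volume S) = ∫⁻ _ in S, 1 from (setLIntegral_one S).symm]
  refine setLIntegral_congr_fun hSmeas (fun y hy => ?_)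
  have h1 := (hSsub hy).1
  have h2 := (hSsub hy).2
  rw [← ENNReal.ofReal_add (by linarith) (by linarith), show (y + 1) / 2 + (1 - y) / 2 = 1 by ring,
    ENNReal.ofReal_one]
end
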